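/- (The interior level sets consist of two ovals.) For every h with −1/4 < h < 0, the level set {(x, y) ∈ ℝ² : H(x, y) = h} = {(x, y) : y²/2 − x²/2 + x⁴/4 = h} is compact and has exactly two connected components, one contained in the half-plane x > 0 and one contained in the half-plane x < 0. -/

import Mathlib

set_option maxHeartbeats 2000000


/-- For `-1/4 < h < 0` the interior level set `{H = h}` of the Duffing Hamiltonian
`H(x,y) = y²/2 - x²/2 + x⁴/4` is compact and consists of exactly two connected
components (ovals), one in the half-plane `x > 0` and one in the half-plane `x < 0`. -/
theorem interior_level_set_two_ovals (h : ℝ) (hh1 : -(1/4) < h) (hh2 : h < 0) :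
    let S : Set (ℝ × ℝ) := {p | p.2^2/2 - p.1^2/2 + p.1^4/4 = h}
    IsCompact S ∧
      ∃ A B : Set (ℝ × ℝ), S = A ∪ B ∧ Disjoint A B ∧
        A.Nonempty ∧ B.Nonempty ∧ IsConnected A ∧ IsConnected B ∧
        A ⊆ {p : ℝ × ℝ | 0 < p.1} ∧ B ⊆ {p : ℝ × ℝ | p.1 < 0} := by
  intro S
  have hmem : ∀ p : ℝ × ℝ, p ∈ S ↔ p.2^2/2 - p.1^2/2 + p.1^4/4 = h := fun p => Iff.rfl
  have h4 : (0:ℝ) ≤ 1 + 4*h := by linarith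
  set s : ℝ := Real.sqrt (1 + 4*h) with hs_def
  have hs2 : s^2 = 1 + 4*h := Real.sq_sqrt h4
  have hs_pos : 0 < s := Real.sqrt_pos.mpr (by linarith)
  have hs_lt : s < 1 := by nlinarith
  have h1s : (0:ℝ) ≤ 1 - s := by linarith
  set a : ℝ := Real.sqrt (1 - s) with ha_def
  set b : ℝ := Real.sqrt (1 + s) with hb_def
  have ha2 : a^2 = 1 - s := Real.sq_sqrt h1s
  have hb2 : b^2 = 1 + s := Real.sq_sqrt (by linarith)
  have ha_pos : 0 < a := Real.sqrt_pos.mpr (by linarith)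
  have hb_pos : 0 < b := Real.sqrt_pos.mpr (by linarith)
  have hab : a ≤ b := Real.sqrt_le_sqrt (by linarith)
  set g : ℝ → ℝ := fun x => 2*h + x^2 - x^4/2 with hg_def
  have hg_nonneg : ∀ x ∈ Set.Icc a b, 0 ≤ g x := by
    intro x hx
    have hxa : a^2 ≤ x^2 := pow_le_pow_left₀ ha_pos.le hx.1 2
    have hxb : x^2 ≤ b^2 := pow_le_pow_left₀ (ha_pos.le.trans hx.1) hx.2 2
    have h1 : 1 - s ≤ x^2 := by linarith [ha2 ▸ hxa]
    have h2 : x^2 ≤ 1 + s := by linarith [hb2 ▸ hxb]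
    simp only [hg_def]
    nlinarith [mul_nonneg (by linarith : (0:ℝ) ≤ x^2 - (1 - s)) (by linarith : (0:ℝ) ≤ 1 + s - x^2)]
  -- compactness
  have hScl : IsClosed S := isClosed_eq (by continuity) continuous_const
  have hbound : S ⊆ Metric.closedBall 0 2 := by
    intro p hp
    have hp' : p.2^2/2 - p.1^2/2 + p.1^4/4 = h := hp
    have hx : p.1^2 ≤ 4 := by nlinarith [sq_nonneg p.2, sq_nonneg (p.1^2 - 1), sq_nonneg (p.1^2 - 3)]
    have hy : p.2^2 ≤ 4 := by nlinarith [sq_nonneg (p.1^2 - 1)]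
    rw [Metric.mem_closedBall, dist_zero_right, Prod.norm_def]
    apply max_le
    · rw [Real.norm_eq_abs]; rw [abs_le]; constructor <;> nlinarith
    · rw [Real.norm_eq_abs]; rw [abs_le]; constructor <;> nlinarith
  have hScomp : IsCompact S :=
    Metric.isCompact_of_isClosed_isBounded hScl (Metric.isBounded_closedBall.subset hbound)
  -- the right oval
  set A : Set (ℝ × ℝ) := {p ∈ S | 0 < p.1} with hA_def
  set mm : ℝ × ℝ → ℝ × ℝ := fun p => (-p.1, p.2) with hm_def
  set B : Set (ℝ × ℝ) := mm '' A with hB_def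
  have hApos : A ⊆ {p : ℝ × ℝ | 0 < p.1} := fun p hp => hp.2
  have hBneg : B ⊆ {p : ℝ × ℝ | p.1 < 0} := by
    rintro q ⟨p, hp, rfl⟩
    simpa [hm_def] using hp.2
  -- membership of the graph points
  have hgraph : ∀ x ∈ Set.Icc a b, ∀ ε : ℝ, ε = 1 ∨ ε = -1 →
      (x, ε * Real.sqrt (g x)) ∈ A := by
    intro x hx ε hε
    have hgx : 0 ≤ g x := hg_nonneg x hx
    have hsq : (ε * Real.sqrt (g x))^2 = g x := by
      rcases hε with rfl | rfl <;>
        simp [mul_pow, Real.sq_sqrt hgx]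
    constructor
    · show (ε * Real.sqrt (g x))^2/2 - x^2/2 + x^4/4 = h
      rw [hsq]
      simp only [hg_def]
      ring
    · exact lt_of_lt_of_le ha_pos hx.1
  -- characterization of A
  set fP : ℝ → ℝ × ℝ := fun x => (x, Real.sqrt (g x)) with hfp_def
  set fM : ℝ → ℝ × ℝ := fun x => (x, -Real.sqrt (g x)) with hfm_def
  set U : Set (ℝ × ℝ) := fP '' Set.Icc a b with hU_def
  set L : Set (ℝ × ℝ) := fM '' Set.Icc a b with hL_def
  have hAeq : A = U ∪ L := by
    ext p
    constructor
    · rintro ⟨hpS, hppos⟩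
      have hp' : p.2^2/2 - p.1^2/2 + p.1^4/4 = h := hpS
      have hy2 : p.2^2 = g p.1 := by simp only [hg_def]; linarith
      have hsqle : (p.1^2 - 1)^2 ≤ s^2 := by nlinarith [sq_nonneg p.2]
      have h1 : 1 - s ≤ p.1^2 := by nlinarith [sq_nonneg (p.1^2 - 1 + s)]
      have h2 : p.1^2 ≤ 1 + s := by nlinarith [sq_nonneg (p.1^2 - 1 - s)]
      have hax : a ≤ p.1 := by
        have := Real.sqrt_le_sqrt h1
        rwa [Real.sqrt_sq hppos.le] at this
      have hxb : p.1 ≤ b := by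
        have := Real.sqrt_le_sqrt h2
        rwa [Real.sqrt_sq hppos.le] at this
      have habs : Real.sqrt (g p.1) = |p.2| := by
        rw [← hy2, Real.sqrt_sq_eq_abs]
      rcases le_or_gt 0 p.2 with hy | hy
      · left
        exact ⟨p.1, ⟨hax, hxb⟩, by
          simp only [hfp_def, habs, abs_of_nonneg hy]⟩
      · right
        exact ⟨p.1, ⟨hax, hxb⟩, by
          simp only [hfm_def, habs, abs_of_neg hy, neg_neg]⟩
    · rintro (⟨x, hx, rfl⟩ | ⟨x, hx, rfl⟩)
      · have := hgraph x hx 1 (Or.inl rfl)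
        simpa [hfp_def] using this
      · have := hgraph x hx (-1) (Or.inr rfl)
        simpa [hfm_def] using this
  have hgb : g b = 0 := by
    have : b^4 = (1+s)^2 := by rw [show b^4 = (b^2)^2 by ring, hb2]
    simp only [hg_def]
    nlinarith
  have hbmem : (b, (0:ℝ)) ∈ U ∩ L := by
    constructor
    · exact ⟨b, ⟨hab, le_refl b⟩, by simp [hfp_def, hgb]⟩
    · exact ⟨b, ⟨hab, le_refl b⟩, by simp [hfm_def, hgb]⟩
  have hgcont : Continuous g := by simp only [hg_def]; continuity
  have hUconn : IsConnected U :=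
    (isConnected_Icc hab).image fP
      (continuous_id.prodMk (Real.continuous_sqrt.comp hgcont)).continuousOn
  have hLconn : IsConnected L :=
    (isConnected_Icc hab).image fM
      (continuous_id.prodMk (Real.continuous_sqrt.comp hgcont).neg).continuousOn
  have hAconn : IsConnected A := by
    rw [hAeq]
    exact IsConnected.union ⟨(b, 0), hbmem⟩ hUconn hLconn
  have hmcont : Continuous mm := by simp only [hm_def]; continuity
  have hBconn : IsConnected B := hAconn.image mm hmcont.continuousOn
  have hAne : A.Nonempty := by
    rw [hAeq]; exact ⟨(b, 0), Or.inl hbmem.1⟩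
  have hBne : B.Nonempty := hAne.image mm
  have hdisj : Disjoint A B := by
    rw [Set.disjoint_left]
    intro p hpA hpB
    have h1 : 0 < p.1 := hpA.2
    have h2 : p.1 < 0 := hBneg hpB
    exact absurd h1 (not_lt.mpr h2.le)
  have hSeq : S = A ∪ B := by
    ext p
    constructor
    · intro hpS
      have hp' : p.2^2/2 - p.1^2/2 + p.1^4/4 = h := hpS
      have hne : p.1 ≠ 0 := by
        intro h0
        rw [h0] at hp'
        nlinarith [sq_nonneg p.2]
      rcases hne.lt_or_gt with hneg | hpos
      · right
        refine ⟨(-p.1, p.2), ⟨?_, by simpa using hneg⟩, ?_⟩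
        · show p.2^2/2 - (-p.1)^2/2 + (-p.1)^4/4 = h
          nlinarith [hp']
        · show ((-(-p.1) : ℝ), p.2) = p
          simp
      · left
        exact ⟨hpS, hpos⟩
    · rintro (hpA | ⟨q, hqA, rfl⟩)
      · exact hpA.1
      · have hq : q.2^2/2 - q.1^2/2 + q.1^4/4 = h := hqA.1
        show q.2^2/2 - (-q.1)^2/2 + (-q.1)^4/4 = h
        nlinarith [hq]
  exact ⟨hScomp, A, B, hSeq, hdisj, hAne, hBne, hAconn, hBconn, hApos, hBneg⟩
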